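/- Let f : X → Y be a local homeomorphism between Hausdorff topological spaces which has the path-lifting property. Then f lifts homotopies: for every topological space Z, every continuous map H : Z × [0,1] → Y, and every continuous map H̃₀ : Z → X with f(H̃₀(z)) = H(z,0) for all z ∈ Z, there exists a continuous map H̃ : Z × [0,1] → X such that f ∘ H̃ = H and H̃(z,0) = H̃₀(z) for all z ∈ Z. -/

import Mathlib

/-- A map has the path-lifting property if every path in `Y` with prescribed initial
point over `f` lifts to a path in `X`. -/
def PathLiftingProperty {X Y : Type*} [TopologicalSpace X] [TopologicalSpace Y]
    (f : X → Y) : Prop :=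
  ∀ α : unitInterval → Y, Continuous α → ∀ x₀ : X, f x₀ = α 0 →
    ∃ αt : unitInterval → X, Continuous αt ∧ f ∘ αt = α ∧ αt 0 = x₀

lemma isPreconnected_Icc_I (a b : unitInterval) : IsPreconnected (Set.Icc a b) := by
  have key : Set.Icc a b = Set.projIcc (0:ℝ) 1 zero_le_one '' Set.Icc (a:ℝ) (b:ℝ) := by
    ext x
    simp only [Set.mem_image, Set.mem_Icc]
    constructor
    · rintro ⟨h1, h2⟩
      exact ⟨x, ⟨h1, h2⟩, Set.projIcc_val zero_le_one x⟩
    · rintro ⟨r, ⟨h1, h2⟩, rfl⟩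
      have hr : r ∈ Set.Icc (0:ℝ) 1 := ⟨a.2.1.trans h1, h2.trans b.2.2⟩
      rw [Set.projIcc_of_mem zero_le_one hr]
      exact ⟨by exact_mod_cast h1, by exact_mod_cast h2⟩
  rw [key]
  exact isPreconnected_Icc.image _ continuous_projIcc.continuousOn

lemma Iic_one_I : Set.Iic (1:unitInterval) = Set.univ :=
  Set.eq_univ_of_forall fun t => unitInterval.le_one t

lemma Iic_zero_I : Set.Iic (0:unitInterval) = {0} := by
  ext t; exact ⟨fun h => le_antisymm h (unitInterval.nonneg t), fun h => h.le⟩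

/-- Path-lifting implies homotopy-lifting for local homeomorphisms between
Hausdorff spaces. -/
theorem path_lifting_implies_homotopy_lifting {X Y Z : Type*}
    [TopologicalSpace X] [TopologicalSpace Y] [TopologicalSpace Z]
    [T2Space X] [T2Space Y]
    (f : X → Y) (hf : IsLocalHomeomorph f) (hpl : PathLiftingProperty f)
    (H : Z × unitInterval → Y) (hH : Continuous H)
    (H₀ : Z → X) (hH₀ : Continuous H₀)
    (hbase : ∀ z : Z, f (H₀ z) = H (z, 0)) :
    ∃ Ht : Z × unitInterval → X, Continuous Ht ∧ f ∘ Ht = H ∧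
      ∀ z : Z, Ht (z, 0) = H₀ z := by
  classical
  choose γ hγc hγf hγ0 using fun z =>
    hpl (fun t => H (z, t)) (hH.comp (continuous_const.prodMk continuous_id)) (H₀ z) (hbase z)
  have hfγ : ∀ z t, f (γ z t) = H (z, t) := fun z t => congrFun (hγf z) t
  set Ht : Z × unitInterval → X := fun p => γ p.1 p.2 with hHtdef
  refine ⟨Ht, ?_, funext fun p => hfγ p.1 p.2, fun z => hγ0 z⟩
  rw [continuous_iff_continuousAt]
  rintro ⟨z₀, t₀⟩
  set S : Set unitInterval :=
    {t | ∃ N, N ∈ nhds z₀ ∧ ContinuousOn Ht (N ×ˢ Set.Iic t)} with hSdef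
  have hlower : ∀ {t t' : unitInterval}, t ∈ S → t' ≤ t → t' ∈ S := by
    rintro t t' ⟨N, hN, hc⟩ h
    exact ⟨N, hN, hc.mono (Set.prod_mono_right (Set.Iic_subset_Iic.mpr h))⟩
  have h0S : (0 : unitInterval) ∈ S := by
    refine ⟨Set.univ, Filter.univ_mem, ?_⟩
    rw [Iic_zero_I]
    refine ((hH₀.comp continuous_fst).continuousOn).congr ?_
    rintro ⟨z, t⟩ ⟨-, ht⟩
    simp only [Set.mem_singleton_iff] at ht
    show γ z t = H₀ z
    rw [ht, hγ0]
  -- the key extension step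
  have step : ∀ (s t : unitInterval) (e : OpenPartialHomeomorph X Y), f = e →
      s ∈ S → s ≤ t → (∀ r ∈ Set.Icc s t, γ z₀ r ∈ e.source) →
      ∃ t', t ≤ t' ∧ Set.Iic t' ∈ nhds t ∧ t' ∈ S := by
    rintro s t e hfe ⟨N, hN, hNc⟩ hst hsrc
    -- a tube around {z₀} × [s,t] mapped into e.target by H
    have hV : IsOpen (H ⁻¹' e.target) := e.open_target.preimage hH
    have hsub : Set.singleton z₀ ×ˢ Set.Icc s t ⊆ H ⁻¹' e.target := by
      rintro ⟨z, r⟩ ⟨hz, hr⟩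
      simp only [Set.mem_singleton_iff] at hz
      have := e.map_source (hsrc r hr)
      show H (z, r) ∈ e.target
      rw [hz]
      rwa [← hfe, hfγ z₀ r] at this
    obtain ⟨N₁, J, hN₁o, hJo, hzN₁, hJincl, hNJ⟩ :=
      generalized_tube_lemma isCompact_singleton (isClosed_Icc.isCompact) hV hsub
    have hzN₁' : z₀ ∈ N₁ := hzN₁ rfl
    -- choose t' slightly beyond t (or t itself if t = 1)
    obtain ⟨t', htt', hIict', hIcct'⟩ :
        ∃ t', t ≤ t' ∧ Set.Iic t' ∈ nhds t ∧ Set.Icc s t' ⊆ J := by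
      rcases eq_or_lt_of_le (unitInterval.le_one' (t := t)) with h1 | h1
      · exact ⟨t, le_refl t, by rw [h1, Iic_one_I]; exact Filter.univ_mem,
          fun r hr => hJincl hr⟩
      · have hJmem : J ∈ nhds t := hJo.mem_nhds (hJincl ⟨hst, le_refl t⟩)
        obtain ⟨u, hu, hIco⟩ := exists_Ico_subset_of_mem_nhds hJmem ⟨1, h1⟩
        obtain ⟨t', ht1, ht2⟩ := exists_between hu
        refine ⟨t', ht1.le, Filter.mem_of_superset (isOpen_Iio.mem_nhds ht1)
          Set.Iio_subset_Iic_self, ?_⟩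
        rintro r ⟨hr1, hr2⟩
        rcases le_or_gt r t with h | h
        · exact hJincl ⟨hr1, h⟩
        · exact hIco ⟨h.le, lt_of_le_of_lt hr2 ht2⟩
    -- membership of H in e.target on N₁ × Icc s t'
    have hmemV : ∀ z ∈ N₁, ∀ r ∈ Set.Icc s t', H (z, r) ∈ e.target := fun z hz r hr =>
      hNJ (Set.mk_mem_prod hz (hIcct' hr))
    -- the open neighbourhood on which everything matches
    have hcont_s : ContinuousOn (fun z => Ht (z, s)) N :=
      hNc.comp (Continuous.continuousOn (continuous_id.prodMk continuous_const))
        (fun z hz => Set.mk_mem_prod hz (le_refl s))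
    set O : Set Z :=
      (interior N ∩ (fun z => Ht (z, s)) ⁻¹' e.source) ∩ N₁ with hOdef
    have hOopen : IsOpen O :=
      (((hcont_s.mono interior_subset).isOpen_inter_preimage isOpen_interior
        e.open_source)).inter hN₁o
    have hz₀O : z₀ ∈ O :=
      ⟨⟨mem_interior_iff_mem_nhds.mpr hN, hsrc s ⟨le_refl s, hst⟩⟩, hzN₁'⟩
    -- pointwise (in z) identification of the lift with e.symm ∘ H on [s, t']
    have hkey : ∀ z ∈ O, ∀ r ∈ Set.Icc s t', γ z r = e.symm (H (z, r)) := by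
      rintro z ⟨⟨hzN, hzsrc⟩, hzN₁⟩
      have hg₂cont : ContinuousOn (fun r => e.symm (H (z, r))) (Set.Icc s t') :=
        e.continuousOn_symm.comp
          ((hH.comp (continuous_const.prodMk continuous_id)).continuousOn)
          (fun r hr => hmemV z hzN₁ r hr)
      have hcomp : Set.EqOn (f ∘ γ z) (f ∘ fun r => e.symm (H (z, r))) (Set.Icc s t') := by
        intro r hr
        show f (γ z r) = f (e.symm (H (z, r)))
        rw [hfγ, hfe]
        exact (e.right_inv (hmemV z hzN₁ r hr)).symm
      have hats : γ z s = e.symm (H (z, s)) := by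
        have : H (z, s) = e (γ z s) := by rw [← hfe, hfγ]
        rw [this, e.left_inv hzsrc]
      exact (T2Space.isSeparatedMap f).eqOn_of_comp_eqOn hf.isLocallyInjective
        (isPreconnected_Icc_I s t') ((hγc z).continuousOn) hg₂cont hcomp
        ⟨le_refl s, hst.trans htt'⟩ hats
    refine ⟨t', htt', hIict', O, hOopen.mem_nhds hz₀O, ?_⟩
    -- continuity on O × Iic t' by gluing along r = s
    have hc1 : ContinuousOn Ht (O ×ˢ Set.Iic s) :=
      hNc.mono (Set.prod_mono_left (fun z hz => interior_subset hz.1.1))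
    have hc2 : ContinuousOn Ht (O ×ˢ Set.Icc s t') := by
      have hg : ContinuousOn (fun p : Z × unitInterval => e.symm (H p)) (O ×ˢ Set.Icc s t') :=
        e.continuousOn_symm.comp hH.continuousOn
          (by rintro ⟨z, r⟩ ⟨hz, hr⟩; exact hmemV z hz.2 r hr)
      exact hg.congr (by rintro ⟨z, r⟩ ⟨hz, hr⟩; exact hkey z hz r hr)
    rintro ⟨z, r⟩ ⟨hz, hr⟩
    have hsubU : (O ×ˢ Set.Iic t') ⊆ (O ×ˢ Set.Iic s) ∪ (O ×ˢ Set.Icc s t') := by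
      rintro ⟨z', r'⟩ ⟨hz', hr'⟩
      rcases le_or_gt r' s with h | h
      · exact Or.inl ⟨hz', h⟩
      · exact Or.inr ⟨hz', h.le, hr'⟩
    refine ContinuousWithinAt.mono ?_ hsubU
    rcases le_or_gt r s with h | h
    · refine (hc1 (z, r) ⟨hz, h⟩).union ?_
      rcases eq_or_lt_of_le h with h' | h'
      · exact hc2 (z, r) ⟨hz, h'.ge, h'.le.trans (hst.trans htt')⟩
      · refine continuousWithinAt_of_notMem_closure ?_
        intro hcl
        have : (z, r) ∈ Set.univ ×ˢ Set.Icc s t' :=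
          closure_minimal (Set.prod_mono (Set.subset_univ O) subset_rfl)
            (isClosed_univ.prod isClosed_Icc) hcl
        exact absurd this.2.1 (not_le.mpr h')
    · refine ContinuousWithinAt.union ?_ (hc2 (z, r) ⟨hz, h.le, hr⟩)
      refine continuousWithinAt_of_notMem_closure ?_
      intro hcl
      have : (z, r) ∈ Set.univ ×ˢ Set.Iic s :=
        closure_minimal (Set.prod_mono (Set.subset_univ O) subset_rfl)
          (isClosed_univ.prod isClosed_Iic) hcl
      exact absurd this.2 (not_le.mpr h)
  -- S is clopen, hence everything
  have hopen : IsOpen S := by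
    rw [isOpen_iff_mem_nhds]
    intro t ht
    obtain ⟨e, hesrc, hfe⟩ := hf (γ z₀ t)
    obtain ⟨t', htt', hmem, ht'S⟩ := step t t e hfe ht (le_refl t)
      (by rintro r ⟨h1, h2⟩; rw [le_antisymm h2 h1]; exact hesrc)
    exact Filter.mem_of_superset hmem (fun r hr => hlower ht'S hr)
  have hclosed : IsClosed S := by
    rw [← closure_subset_iff_isClosed]
    intro t ht
    by_cases h0 : t = 0
    · exact h0 ▸ h0S
    obtain ⟨e, hesrc, hfe⟩ := hf (γ z₀ t)
    have hpre : (γ z₀) ⁻¹' e.source ∈ nhds t :=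
      (e.open_source.preimage (hγc z₀)).mem_nhds hesrc
    have ht0 : (0 : unitInterval) < t := lt_of_le_of_ne (unitInterval.nonneg t) (Ne.symm h0)
    obtain ⟨c, hct, hsubc⟩ := exists_Ioc_subset_of_mem_nhds hpre ⟨0, ht0⟩
    obtain ⟨s, hsIoi, hsS⟩ := mem_closure_iff_nhds.mp ht (Set.Ioi c) (isOpen_Ioi.mem_nhds hct)
    rcases le_or_gt t s with h | h
    · exact hlower hsS h
    · obtain ⟨t', htt', _, ht'S⟩ := step s t e hfe hsS h.le
        (fun r hr => hsubc ⟨lt_of_lt_of_le hsIoi hr.1, hr.2⟩)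
      exact hlower ht'S htt'
  have h1S : (1 : unitInterval) ∈ S := by
    rw [IsClopen.eq_univ ⟨hclosed, hopen⟩ ⟨0, h0S⟩]
    exact Set.mem_univ 1
  obtain ⟨N, hN, hNc⟩ := h1S
  rw [Iic_one_I] at hNc
  exact hNc.continuousAt (prod_mem_nhds hN Filter.univ_mem)
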